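/- Let $m \geq 3$ be odd and let $C$ be the $D_m$-lattice of rank $2m+1$ defined by: basis $a_1,\ldots,a_m,b_1,\ldots,b_m,c_1$ with $x$ cyclically permuting the $a_i$ and the $b_i$ and fixing $c_1$, and $y$ acting by $a_i \leftrightarrow a_{m-i}$, $a_m \mapsto a_m$, $b_i \leftrightarrow b_{m+1-i}$, $b_{(m+1)/2} \mapsto b_{(m+1)/2}$, $c_1 \mapsto \sum_{i=1}^m a_i - c_1$. Then the zeroth Tate cohomology $\widehat{H}^0(D_m, C) = C^{D_m}/N_{D_m}(C)$ is isomorphic to $\mathbb{Z}/2\mathbb{Z}$, where $N_{D_m}(C)$ is the image of the norm map $c \mapsto \sum_{g \in D_m} g \cdot c$. -/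

import Mathlib

namespace Stmt6Aux

variable (m : ℕ)

abbrev V (m : ℕ) := (ZMod m ⊕ ZMod m ⊕ Unit) → ℤ

def ea (i : ZMod m) : V m := Pi.single (Sum.inl i) 1
def eb (i : ZMod m) : V m := Pi.single (Sum.inr (Sum.inl i)) 1
def ec : V m := Pi.single (Sum.inr (Sum.inr ())) 1
noncomputable def A [NeZero m] : V m := ∑ i : ZMod m, ea m i
noncomputable def B [NeZero m] : V m := ∑ i : ZMod m, eb m i

def Xmap : V m →ₗ[ℤ] V m where
  toFun v := Sum.elim (fun i => v (Sum.inl (i - 1)))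
    (Sum.elim (fun i => v (Sum.inr (Sum.inl (i - 1)))) (fun _ => v (Sum.inr (Sum.inr ()))))
  map_add' u v := by funext j; rcases j with i | i | ⟨⟩ <;> simp
  map_smul' c v := by funext j; rcases j with i | i | ⟨⟩ <;> simp

def Ymap : V m →ₗ[ℤ] V m where
  toFun v := Sum.elim (fun i => v (Sum.inl (-i)) + v (Sum.inr (Sum.inr ())))
    (Sum.elim (fun i => v (Sum.inr (Sum.inl (1 - i)))) (fun _ => - v (Sum.inr (Sum.inr ()))))
  map_add' u v := by funext j; rcases j with i | i | ⟨⟩ <;> simp <;> ring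
  map_smul' c v := by funext j; rcases j with i | i | ⟨⟩ <;> simp <;> ring

@[simp] lemma Xmap_apply_a (v : V m) (i : ZMod m) :
    Xmap m v (Sum.inl i) = v (Sum.inl (i - 1)) := rfl
@[simp] lemma Xmap_apply_b (v : V m) (i : ZMod m) :
    Xmap m v (Sum.inr (Sum.inl i)) = v (Sum.inr (Sum.inl (i - 1))) := rfl
@[simp] lemma Xmap_apply_c (v : V m) (u : Unit) :
    Xmap m v (Sum.inr (Sum.inr u)) = v (Sum.inr (Sum.inr ())) := rfl
@[simp] lemma Ymap_apply_a (v : V m) (i : ZMod m) :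
    Ymap m v (Sum.inl i) = v (Sum.inl (-i)) + v (Sum.inr (Sum.inr ())) := rfl
@[simp] lemma Ymap_apply_b (v : V m) (i : ZMod m) :
    Ymap m v (Sum.inr (Sum.inl i)) = v (Sum.inr (Sum.inl (1 - i))) := rfl
@[simp] lemma Ymap_apply_c (v : V m) (u : Unit) :
    Ymap m v (Sum.inr (Sum.inr u)) = - v (Sum.inr (Sum.inr ())) := rfl

lemma ea_apply (i : ZMod m) (j) : ea m i j = if j = Sum.inl i then 1 else 0 := by
  simp [ea, Pi.single_apply]
lemma eb_apply (i : ZMod m) (j) : eb m i j = if j = Sum.inr (Sum.inl i) then 1 else 0 := by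
  simp [eb, Pi.single_apply]
lemma ec_apply (j) : ec m j = if j = Sum.inr (Sum.inr ()) then 1 else 0 := by
  simp [ec, Pi.single_apply]

@[simp] lemma A_apply_a (i : ZMod m) [NeZero m] : A m (Sum.inl i) = 1 := by
  simp [A, Finset.sum_apply, ea_apply]
@[simp] lemma A_apply_b (i : ZMod m) [NeZero m] : A m (Sum.inr (Sum.inl i)) = 0 := by
  simp [A, Finset.sum_apply, ea_apply]
@[simp] lemma A_apply_c [NeZero m] (u : Unit) : A m (Sum.inr (Sum.inr u)) = 0 := by
  simp [A, Finset.sum_apply, ea_apply]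
@[simp] lemma B_apply_a (i : ZMod m) [NeZero m] : B m (Sum.inl i) = 0 := by
  simp [B, Finset.sum_apply, eb_apply]
@[simp] lemma B_apply_b (i : ZMod m) [NeZero m] : B m (Sum.inr (Sum.inl i)) = 1 := by
  simp [B, Finset.sum_apply, eb_apply]
@[simp] lemma B_apply_c [NeZero m] (u : Unit) : B m (Sum.inr (Sum.inr u)) = 0 := by
  simp [B, Finset.sum_apply, eb_apply]

lemma Xmap_ea (i : ZMod m) : Xmap m (ea m i) = ea m (i + 1) := by
  funext j; rcases j with j | j | ⟨⟩ <;>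
    simp [ea_apply, sub_eq_iff_eq_add]
lemma Xmap_eb (i : ZMod m) : Xmap m (eb m i) = eb m (i + 1) := by
  funext j; rcases j with j | j | ⟨⟩ <;>
    simp [eb_apply, sub_eq_iff_eq_add]
lemma Xmap_ec : Xmap m (ec m) = ec m := by
  funext j; rcases j with j | j | ⟨⟩ <;> simp [ec_apply]
lemma Ymap_ea (i : ZMod m) : Ymap m (ea m i) = ea m (-i) := by
  funext j; rcases j with j | j | ⟨⟩ <;>
    simp [ea_apply, neg_eq_iff_eq_neg]
lemma Ymap_eb (i : ZMod m) : Ymap m (eb m i) = eb m (1 - i) := by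
  funext j; rcases j with j | j | ⟨⟩ <;>
    simp [eb_apply]
  congr 1
  exact propext ⟨fun h => by rw [← h]; ring, fun h => by rw [h]; ring⟩
lemma Ymap_ec [NeZero m] : Ymap m (ec m) = A m - ec m := by
  funext j; rcases j with j | j | ⟨⟩ <;> simp [ec_apply]

lemma Xmap_pow_ea (n : ℕ) (i : ZMod m) : (Xmap m ^ n) (ea m i) = ea m (i + n) := by
  induction n with
  | zero => simp
  | succ n ih => rw [pow_succ', Module.End.mul_apply, ih, Xmap_ea]; push_cast; ring_nf
lemma Xmap_pow_eb (n : ℕ) (i : ZMod m) : (Xmap m ^ n) (eb m i) = eb m (i + n) := by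
  induction n with
  | zero => simp
  | succ n ih => rw [pow_succ', Module.End.mul_apply, ih, Xmap_eb]; push_cast; ring_nf
lemma Xmap_pow_ec (n : ℕ) : (Xmap m ^ n) (ec m) = ec m := by
  induction n with
  | zero => simp
  | succ n ih => rw [pow_succ', Module.End.mul_apply, ih, Xmap_ec]

lemma sum_dihedral [NeZero m] {M : Type*} [AddCommMonoid M] (f : DihedralGroup m → M) :
    ∑ g : DihedralGroup m, f g
      = ∑ k : ZMod m, f (.r k) + ∑ k : ZMod m, f (.sr k) := by
  have hbij : Function.Bijective
      (Sum.elim (DihedralGroup.r (n := m)) (DihedralGroup.sr (n := m))) := by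
    constructor
    · rintro (a | a) (b | b) h <;> simp_all
    · rintro (g | g)
      exacts [⟨Sum.inl g, rfl⟩, ⟨Sum.inr g, rfl⟩]
  rw [← Fintype.sum_bijective _ hbij
    (fun x => f (Sum.elim DihedralGroup.r DihedralGroup.sr x)) f (fun x => rfl),
    Fintype.sum_sum_type]
  rfl

lemma sum_ea_shift [NeZero m] (i : ZMod m) : ∑ k : ZMod m, ea m (i + k) = A m :=
  Fintype.sum_equiv (Equiv.addLeft i) _ _ (fun _ => rfl)

lemma sum_ea_refl [NeZero m] (i : ZMod m) : ∑ k : ZMod m, ea m (-(i + k)) = A m :=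
  Fintype.sum_equiv ((Equiv.addLeft i).trans (Equiv.neg _)) _ _ (fun _ => rfl)

lemma sum_eb_shift [NeZero m] (i : ZMod m) : ∑ k : ZMod m, eb m (i + k) = B m :=
  Fintype.sum_equiv (Equiv.addLeft i) _ _ (fun _ => rfl)

lemma sum_eb_refl [NeZero m] (i : ZMod m) : ∑ k : ZMod m, eb m (1 - (i + k)) = B m :=
  Fintype.sum_equiv ((Equiv.addLeft i).trans (Equiv.subLeft 1)) _ _ (fun _ => rfl)

lemma ext_basis [NeZero m] {W : Type*} [AddCommGroup W] [Module ℤ W]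
    (f g : V m →ₗ[ℤ] W) (h : ∀ j, f (Pi.single j 1) = g (Pi.single j 1)) : f = g := by
  apply LinearMap.pi_ext
  intro i x
  have hx : (Pi.single i x : V m) = x • Pi.single i 1 := by
    funext j; by_cases hji : j = i <;> simp [Pi.single_apply, hji]
  rw [hx, LinearMap.map_smul, LinearMap.map_smul, h i]

end Stmt6Aux

open Stmt6Aux in
/-- For `m ≥ 3` odd, the zeroth Tate cohomology `Ĥ⁰(D_m, C) = C^{D_m}/N_{D_m}(C)`
of the rank-`(2m+1)` lattice `C` (basis `a_i, b_i, c₁` with the dihedral action of the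
main construction) is isomorphic to `ℤ/2ℤ`. -/
theorem stmt_6 (m : ℕ) [NeZero m] (hm : 3 ≤ m) (hodd : Odd m)
    (ρC : Representation ℤ (DihedralGroup m) ((ZMod m ⊕ ZMod m ⊕ Unit) → ℤ))
    (hxa : ∀ i : ZMod m, ρC (DihedralGroup.r 1) (Pi.single (Sum.inl i) 1) =
      Pi.single (Sum.inl (i + 1)) 1)
    (hxb : ∀ i : ZMod m, ρC (DihedralGroup.r 1) (Pi.single (Sum.inr (Sum.inl i)) 1) =
      Pi.single (Sum.inr (Sum.inl (i + 1))) 1)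
    (hxc : ρC (DihedralGroup.r 1) (Pi.single (Sum.inr (Sum.inr ())) 1) =
      Pi.single (Sum.inr (Sum.inr ())) 1)
    (hya : ∀ i : ZMod m, ρC (DihedralGroup.sr 0) (Pi.single (Sum.inl i) 1) =
      Pi.single (Sum.inl (-i)) 1)
    (hyb : ∀ i : ZMod m, ρC (DihedralGroup.sr 0) (Pi.single (Sum.inr (Sum.inl i)) 1) =
      Pi.single (Sum.inr (Sum.inl (1 - i))) 1)
    (hyc : ρC (DihedralGroup.sr 0) (Pi.single (Sum.inr (Sum.inr ())) 1) =
      (∑ i : ZMod m, Pi.single (Sum.inl i) 1) - Pi.single (Sum.inr (Sum.inr ())) 1)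
    (F : Submodule ℤ ((ZMod m ⊕ ZMod m ⊕ Unit) → ℤ))
    (hF : F = ⨅ g : DihedralGroup m, LinearMap.ker (ρC g - LinearMap.id))
    (N : ((ZMod m ⊕ ZMod m ⊕ Unit) → ℤ) →ₗ[ℤ] ((ZMod m ⊕ ZMod m ⊕ Unit) → ℤ))
    (hN : N = ∑ g : DihedralGroup m, ρC g) :
    Nonempty ((↥F ⧸ Submodule.comap F.subtype (LinearMap.range N)) ≃ₗ[ℤ] ZMod 2) := by
  -- The generators act as `Xmap` and `Ymap`.
  have hX : ρC (DihedralGroup.r 1) = Xmap m := by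
    apply ext_basis
    rintro (i | i | ⟨⟩)
    · rw [hxa i]; exact (Xmap_ea m i).symm
    · rw [hxb i]; exact (Xmap_eb m i).symm
    · rw [hxc]; exact (Xmap_ec m).symm
  have hY : ρC (DihedralGroup.sr 0) = Ymap m := by
    apply ext_basis
    rintro (i | i | ⟨⟩)
    · rw [hya i]; exact (Ymap_ea m i).symm
    · rw [hyb i]; exact (Ymap_eb m i).symm
    · rw [hyc]; exact ((Ymap_ec m).trans (by rfl)).symm
  have hr : ∀ k : ZMod m, ρC (DihedralGroup.r k) = Xmap m ^ k.val := by
    intro k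
    have hk : (DihedralGroup.r k : DihedralGroup m) = DihedralGroup.r 1 ^ k.val := by
      rw [DihedralGroup.r_one_pow]
      congr 1
      simp [ZMod.natCast_val, ZMod.cast_id]
    rw [hk, map_pow, hX]
  have hsr : ∀ k : ZMod m, ρC (DihedralGroup.sr k) = Ymap m * Xmap m ^ k.val := by
    intro k
    have hk : (DihedralGroup.sr k : DihedralGroup m)
        = DihedralGroup.sr 0 * DihedralGroup.r k := by
      rw [DihedralGroup.sr_mul_r, zero_add]
    rw [hk, map_mul, hY, hr]
  -- Norm on basis vectors.
  have hNsplit : ∀ v, N v = ∑ k : ZMod m, (Xmap m ^ k.val) v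
      + ∑ k : ZMod m, Ymap m ((Xmap m ^ k.val) v) := by
    intro v
    rw [hN, LinearMap.sum_apply, sum_dihedral m (fun g => ρC g v)]
    refine congrArg₂ (· + ·) ?_ ?_ <;> refine Finset.sum_congr rfl fun k _ => ?_
    · rw [hr]
    · rw [hsr]; rfl
  have hcast : ∀ k : ZMod m, ((k.val : ℕ) : ZMod m) = k := by
    intro k; simp [ZMod.natCast_val, ZMod.cast_id]
  have hNa : ∀ i, N (ea m i) = A m + A m := by
    intro i
    rw [hNsplit]
    have h1 : ∑ k : ZMod m, (Xmap m ^ k.val) (ea m i) = A m := by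
      rw [Finset.sum_congr rfl fun k _ => by rw [Xmap_pow_ea, hcast]]
      exact sum_ea_shift m i
    have h2 : ∑ k : ZMod m, Ymap m ((Xmap m ^ k.val) (ea m i)) = A m := by
      rw [Finset.sum_congr rfl fun k _ => by rw [Xmap_pow_ea, Ymap_ea, hcast]]
      exact sum_ea_refl m i
    rw [h1, h2]
  have hNb : ∀ i, N (eb m i) = B m + B m := by
    intro i
    rw [hNsplit]
    have h1 : ∑ k : ZMod m, (Xmap m ^ k.val) (eb m i) = B m := by
      rw [Finset.sum_congr rfl fun k _ => by rw [Xmap_pow_eb, hcast]]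
      exact sum_eb_shift m i
    have h2 : ∑ k : ZMod m, Ymap m ((Xmap m ^ k.val) (eb m i)) = B m := by
      rw [Finset.sum_congr rfl fun k _ => by rw [Xmap_pow_eb, Ymap_eb, hcast]]
      exact sum_eb_refl m i
    rw [h1, h2]
  have hNc : N (ec m) = (m : ℤ) • A m := by
    rw [hNsplit]
    simp only [Xmap_pow_ec, Ymap_ec]
    simp only [Finset.sum_const, Finset.card_univ, ZMod.card, Finset.sum_sub_distrib]
    rw [Nat.cast_smul_eq_nsmul]
    simp only [smul_sub]
    abel
  -- Membership facts for the range of the norm.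
  obtain ⟨u, hu⟩ := hodd
  have hm' : (m : ℤ) = 2 * u + 1 := by exact_mod_cast hu
  have hA_mem : A m ∈ LinearMap.range N := by
    refine ⟨ec m - (u : ℤ) • ea m 0, ?_⟩
    rw [map_sub, LinearMap.map_smul, hNc, hNa, hm']
    module
  have h2B_mem : B m + B m ∈ LinearMap.range N := ⟨eb m 0, hNb 0⟩
  -- The coordinate functional mod 2.
  set ψ : ((ZMod m ⊕ ZMod m ⊕ Unit) → ℤ) →ₗ[ℤ] ZMod 2 :=
    ((Int.castRingHom (ZMod 2)).toAddMonoidHom.toIntLinearMap).comp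
      (LinearMap.proj (Sum.inr (Sum.inl 0))) with hψdef
  have hψapp : ∀ v : (ZMod m ⊕ ZMod m ⊕ Unit) → ℤ,
      ψ v = ((v (Sum.inr (Sum.inl 0)) : ℤ) : ZMod 2) := fun v => rfl
  have hψN : ∀ w, ψ (N w) = 0 := by
    have hcomp : ψ.comp N = 0 := by
      apply ext_basis
      rintro (i | i | ⟨⟩) <;> simp only [LinearMap.comp_apply, LinearMap.zero_apply]
      · rw [show (Pi.single (Sum.inl i) 1 : (ZMod m ⊕ ZMod m ⊕ Unit) → ℤ) = ea m i from rfl,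
          hNa, hψapp]
        simp
      · rw [show (Pi.single (Sum.inr (Sum.inl i)) 1 : (ZMod m ⊕ ZMod m ⊕ Unit) → ℤ)
            = eb m i from rfl, hNb, hψapp]
        simp
        decide
      · rw [show (Pi.single (Sum.inr (Sum.inr ())) 1 : (ZMod m ⊕ ZMod m ⊕ Unit) → ℤ)
            = ec m from rfl, hNc, hψapp]
        simp
    intro w
    have := LinearMap.congr_fun hcomp w
    simpa using this
  -- Characterisation of the fixed submodule.
  have hFiff : ∀ v, v ∈ F ↔ Xmap m v = v ∧ Ymap m v = v := by
    intro v
    rw [hF, Submodule.mem_iInf]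
    constructor
    · intro h
      have h1 := h (DihedralGroup.r 1)
      have h2 := h (DihedralGroup.sr 0)
      rw [LinearMap.mem_ker, LinearMap.sub_apply, sub_eq_zero, LinearMap.id_apply, hX] at h1
      rw [LinearMap.mem_ker, LinearMap.sub_apply, sub_eq_zero, LinearMap.id_apply, hY] at h2
      exact ⟨h1, h2⟩
    · rintro ⟨h1, h2⟩ g
      rw [LinearMap.mem_ker, LinearMap.sub_apply, sub_eq_zero, LinearMap.id_apply]
      have hXp : ∀ n : ℕ, (Xmap m ^ n) v = v := by
        intro n
        induction n with
        | zero => rfl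
        | succ n ih => rw [pow_succ, Module.End.mul_apply, h1, ih]
      rcases g with k | k
      · rw [hr]; exact hXp _
      · rw [hsr, Module.End.mul_apply, hXp, h2]
  have hfix_struct : ∀ v, v ∈ F →
      v = v (Sum.inl 0) • A m + v (Sum.inr (Sum.inl 0)) • B m := by
    intro v hv
    obtain ⟨h1, h2⟩ := (hFiff v).1 hv
    have keya : ∀ i : ZMod m, v (Sum.inl (i - 1)) = v (Sum.inl i) :=
      fun i => congrFun h1 (Sum.inl i)
    have keyb : ∀ i : ZMod m, v (Sum.inr (Sum.inl (i - 1))) = v (Sum.inr (Sum.inl i)) :=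
      fun i => congrFun h1 (Sum.inr (Sum.inl i))
    have ha : ∀ i : ZMod m, v (Sum.inl i) = v (Sum.inl 0) := by
      have hn : ∀ n : ℕ, v (Sum.inl (n : ZMod m)) = v (Sum.inl 0) := by
        intro n
        induction n with
        | zero => norm_num
        | succ n ih =>
          have h := keya ((n : ZMod m) + 1)
          rw [add_sub_cancel_right] at h
          push_cast
          rw [← h, ih]
      intro i
      have := hn i.val
      rwa [hcast] at this
    have hb : ∀ i : ZMod m, v (Sum.inr (Sum.inl i)) = v (Sum.inr (Sum.inl 0)) := by
      have hn : ∀ n : ℕ, v (Sum.inr (Sum.inl (n : ZMod m))) = v (Sum.inr (Sum.inl 0)) := by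
        intro n
        induction n with
        | zero => norm_num
        | succ n ih =>
          have h := keyb ((n : ZMod m) + 1)
          rw [add_sub_cancel_right] at h
          push_cast
          rw [← h, ih]
      intro i
      have := hn i.val
      rwa [hcast] at this
    have hc : v (Sum.inr (Sum.inr ())) = 0 := by
      have h := congrFun h2 (Sum.inr (Sum.inr ()))
      have : -v (Sum.inr (Sum.inr ())) = v (Sum.inr (Sum.inr ())) := h
      omega
    funext j
    rcases j with i | i | ⟨⟩
    · simp [ha i]
    · simp [hb i]
    · simp [hc]
  have hBF : B m ∈ F := by
    rw [hFiff]
    constructor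
    · rw [show B m = ∑ i : ZMod m, eb m i from rfl, map_sum]
      simp_rw [Xmap_eb, add_comm _ (1 : ZMod m)]
      exact sum_eb_shift m 1
    · rw [show B m = ∑ i : ZMod m, eb m i from rfl, map_sum]
      simp_rw [Ymap_eb]
      have := sum_eb_refl m 0
      simp only [zero_add] at this; exact this
  -- The quotient map to `ZMod 2`.
  set φ : F →ₗ[ℤ] ZMod 2 := ψ.comp F.subtype with hφdef
  have hker : LinearMap.ker φ = Submodule.comap F.subtype (LinearMap.range N) := by
    ext v
    simp only [LinearMap.mem_ker, Submodule.mem_comap, LinearMap.comp_apply,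
      Submodule.coe_subtype, hφdef]
    constructor
    · intro h0
      rw [hψapp] at h0
      have hdvd : (2 : ℤ) ∣ (v : (ZMod m ⊕ ZMod m ⊕ Unit) → ℤ) (Sum.inr (Sum.inl 0)) := by
        exact_mod_cast (ZMod.intCast_zmod_eq_zero_iff_dvd _ 2).1 h0
      obtain ⟨t, ht⟩ := hdvd
      have hv := hfix_struct v v.2
      rw [hv, ht]
      refine Submodule.add_mem _ (Submodule.smul_mem _ _ hA_mem) ?_
      have h2t : (2 * t) • B m = t • (B m + B m) := by module
      rw [h2t]
      exact Submodule.smul_mem _ _ h2B_mem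
    · rintro ⟨w, hw⟩
      rw [← hw]
      exact hψN w
  have hsurj : Function.Surjective φ := by
    intro z
    have hz : z = 0 ∨ z = 1 := by revert z; decide
    rcases hz with rfl | rfl
    · exact ⟨0, map_zero φ⟩
    · refine ⟨⟨B m, hBF⟩, ?_⟩
      show ψ (B m) = 1
      rw [hψapp]
      simp
  exact ⟨(Submodule.quotEquivOfEq _ _ hker.symm).trans (φ.quotKerEquivOfSurjective hsurj)⟩
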